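/- For |q|<1, ψ(-q) = E(q)E(q⁴)/E(q²), where ψ(q) = ∑_{n∈ℤ} q^{2n²-n} and E(q) = ∏_{n≥1}(1-q^n). -/

import Mathlib

open scoped BigOperators

noncomputable def E (q : ℂ) : ℂ := ∏' n : ℕ, (1 - q ^ (n + 1))

noncomputable def ramaf (a b : ℂ) : ℂ :=
  ∑' n : ℤ, a ^ (n * (n + 1) / 2) * b ^ (n * (n - 1) / 2)

noncomputable def phi (q : ℂ) : ℂ := ∑' n : ℤ, q ^ (n ^ 2)

noncomputable def psi (q : ℂ) : ℂ := ∑' n : ℤ, q ^ (2 * n ^ 2 - n)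

open Filter Finset

namespace JTPaux

noncomputable def Fp (t : ℂ) (k : ℕ) : ℂ := ∏ i ∈ Finset.range k, (1 - t ^ (i + 1))

noncomputable def G (t : ℂ) (m : ℤ) : ℂ := if 0 ≤ m then (Fp t m.toNat)⁻¹ else 0

noncomputable def B (t : ℂ) (n : ℕ) (m : ℤ) : ℂ := Fp t n * G t m * G t ((n : ℤ) - m)

noncomputable def jc (s : ℂ) : ℕ → ℤ → ℂ
  | 0, n => if n = 0 then 1 else 0
  | (N+1), n => jc s N n * (1 + s ^ (4 * N + 2)) +
      s ^ (2 * N + 1) * (jc s N (n - 1) + jc s N (n + 1))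

noncomputable def Fpinf (t : ℂ) : ℂ := ∏' i : ℕ, (1 - t ^ (i + 1))

noncomputable def Ct (a : ℝ) : ℝ := Real.exp (a * (1 - a)⁻¹)

noncomputable def Dt (a : ℝ) : ℝ := Real.exp (-(a * (1 - a)⁻¹ * (1 - a)⁻¹))

lemma Ct_pos (a : ℝ) : 0 < Ct a := Real.exp_pos _

lemma Dt_pos (a : ℝ) : 0 < Dt a := Real.exp_pos _

variable {t s z q : ℂ} {a : ℝ} {w : ℕ → ℂ}

lemma one_sub_ne (ht : ‖t‖ < 1) (k : ℕ) : (1 : ℂ) - t ^ (k + 1) ≠ 0 := by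
  intro h
  have h2 : t ^ (k+1) = 1 := by linear_combination -h
  have : ‖t ^ (k+1)‖ < 1 := by
    rw [norm_pow]
    exact pow_lt_one₀ (norm_nonneg t) ht (Nat.succ_ne_zero k)
  rw [h2] at this; simp at this

lemma Fp_ne_zero (ht : ‖t‖ < 1) (k : ℕ) : Fp t k ≠ 0 :=
  Finset.prod_ne_zero_iff.2 fun i _ => one_sub_ne ht i

lemma Fp_succ (t : ℂ) (k : ℕ) : Fp t (k + 1) = Fp t k * (1 - t ^ (k + 1)) :=
  Finset.prod_range_succ _ _

@[simp] lemma Fp_zero (t : ℂ) : Fp t 0 = 1 := rfl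

@[simp] lemma G_natCast (t : ℂ) (k : ℕ) : G t (k : ℤ) = (Fp t k)⁻¹ := by
  simp [G]

lemma G_neg (t : ℂ) {m : ℤ} (hm : m < 0) : G t m = 0 := by
  simp [G, not_le.2 hm]

lemma B_eq (t : ℂ) (j l : ℕ) : B t (j + l) (j : ℤ) = Fp t (j + l) * (Fp t j)⁻¹ * (Fp t l)⁻¹ := by
  have h1 : ((j + l : ℕ) : ℤ) - (j : ℤ) = (l : ℤ) := by push_cast; ring
  rw [B, h1, G_natCast, G_natCast]

lemma B_zero_of_neg (t : ℂ) (n : ℕ) {m : ℤ} (hm : m < 0) : B t n m = 0 := by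
  simp [B, G_neg t hm]

lemma B_zero_of_gt (t : ℂ) (n : ℕ) {m : ℤ} (hm : (n : ℤ) < m) : B t n m = 0 := by
  have : ((n : ℤ) - m) < 0 := by omega
  simp [B, G_neg t this]

lemma B_left (ht : ‖t‖ < 1) (n : ℕ) : B t n 0 = 1 := by
  have := B_eq t 0 n
  simp only [Nat.zero_add, Nat.cast_zero] at this
  rw [this, Fp_zero]
  field_simp [Fp_ne_zero ht]

lemma B_right (ht : ‖t‖ < 1) (n : ℕ) : B t n (n : ℤ) = 1 := by
  have := B_eq t n 0
  simp only [Nat.add_zero, Nat.cast_zero] at this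
  rw [this, Fp_zero]
  field_simp [Fp_ne_zero ht]

lemma B_pascal1 (ht : ‖t‖ < 1) (n : ℕ) (m : ℤ) :
    B t (n + 1) m = B t n m + t ^ ((n : ℤ) + 1 - m) * B t n (m - 1) := by
  obtain hm | hm | ⟨hm1, hm2⟩ | hm | hm :
      m < 0 ∨ m = 0 ∨ (1 ≤ m ∧ m ≤ (n : ℤ)) ∨ m = (n : ℤ) + 1 ∨ (n : ℤ) + 1 < m := by omega
  · rw [B_zero_of_neg t _ hm, B_zero_of_neg t n hm, B_zero_of_neg t n (by omega)]
    ring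
  · subst hm
    rw [B_left ht, B_left ht, B_zero_of_neg t n (by omega)]
    ring
  · obtain ⟨j, rfl⟩ : ∃ j : ℕ, m = (j : ℤ) + 1 := ⟨(m - 1).toNat, by omega⟩
    obtain ⟨l, rfl⟩ : ∃ l : ℕ, n = j + 1 + l := ⟨n - (j + 1), by omega⟩
    have eb1 : B t (j + 1 + l + 1) ((j : ℤ) + 1)
        = Fp t (j + 1 + l + 1) * (Fp t (j + 1))⁻¹ * (Fp t (l + 1))⁻¹ := by
      have := B_eq t (j + 1) (l + 1)
      push_cast at this ⊢
      convert this using 2 <;> push_cast <;> ring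
    have eb2 : B t (j + 1 + l) ((j : ℤ) + 1)
        = Fp t (j + 1 + l) * (Fp t (j + 1))⁻¹ * (Fp t l)⁻¹ := by
      have := B_eq t (j + 1) l
      push_cast at this ⊢
      convert this using 2 <;> push_cast <;> ring
    have eb3 : B t (j + 1 + l) ((j : ℤ) + 1 - 1)
        = Fp t (j + 1 + l) * (Fp t j)⁻¹ * (Fp t (l + 1))⁻¹ := by
      have := B_eq t j (l + 1)
      push_cast at this ⊢
      convert this using 2 <;> push_cast <;> ring
    have ee : ((j + 1 + l : ℕ) : ℤ) + 1 - ((j : ℤ) + 1) = ((l + 1 : ℕ) : ℤ) := by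
      push_cast; ring
    rw [eb1, eb2, eb3, ee, zpow_natCast]
    have e1 : Fp t (j + 1 + l + 1) = Fp t (j + 1 + l) * (1 - t ^ (j + 1 + l + 1)) := Fp_succ t _
    have e2 : Fp t (j + 1) = Fp t j * (1 - t ^ (j + 1)) := Fp_succ t j
    have e3 : Fp t (l + 1) = Fp t l * (1 - t ^ (l + 1)) := Fp_succ t l
    rw [e1, e2, e3]
    have h1 := Fp_ne_zero ht j
    have h2 := Fp_ne_zero ht l
    have h3 := Fp_ne_zero ht (j + 1 + l)
    have h4 := one_sub_ne ht j
    have h5 := one_sub_ne ht l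
    field_simp
    ring
  · subst hm
    have e1 : ((n : ℤ) + 1) = ((n + 1 : ℕ) : ℤ) := by push_cast; ring
    rw [B_zero_of_gt t n (by omega), e1, B_right ht (n + 1)]
    have e3 : ((n + 1 : ℕ) : ℤ) - 1 = (n : ℤ) := by push_cast; ring
    rw [e3, B_right ht n]
    simp
  · rw [B_zero_of_gt t _ (by push_cast; omega), B_zero_of_gt t n (by omega),
      B_zero_of_gt t n (by omega)]
    ring

lemma B_pascal2 (ht : ‖t‖ < 1) (n : ℕ) (m : ℤ) :
    B t (n + 1) m = t ^ m * B t n m + B t n (m - 1) := by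
  obtain hm | hm | ⟨hm1, hm2⟩ | hm | hm :
      m < 0 ∨ m = 0 ∨ (1 ≤ m ∧ m ≤ (n : ℤ)) ∨ m = (n : ℤ) + 1 ∨ (n : ℤ) + 1 < m := by omega
  · rw [B_zero_of_neg t _ hm, B_zero_of_neg t n hm, B_zero_of_neg t n (by omega)]
    ring
  · subst hm
    rw [B_left ht, B_left ht, B_zero_of_neg t n (by omega)]
    norm_num
  · obtain ⟨j, rfl⟩ : ∃ j : ℕ, m = (j : ℤ) + 1 := ⟨(m - 1).toNat, by omega⟩
    obtain ⟨l, rfl⟩ : ∃ l : ℕ, n = j + 1 + l := ⟨n - (j + 1), by omega⟩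
    have eb1 : B t (j + 1 + l + 1) ((j : ℤ) + 1)
        = Fp t (j + 1 + l + 1) * (Fp t (j + 1))⁻¹ * (Fp t (l + 1))⁻¹ := by
      have := B_eq t (j + 1) (l + 1)
      push_cast at this ⊢
      convert this using 2 <;> push_cast <;> ring
    have eb2 : B t (j + 1 + l) ((j : ℤ) + 1)
        = Fp t (j + 1 + l) * (Fp t (j + 1))⁻¹ * (Fp t l)⁻¹ := by
      have := B_eq t (j + 1) l
      push_cast at this ⊢
      convert this using 2 <;> push_cast <;> ring
    have eb3 : B t (j + 1 + l) ((j : ℤ) + 1 - 1)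
        = Fp t (j + 1 + l) * (Fp t j)⁻¹ * (Fp t (l + 1))⁻¹ := by
      have := B_eq t j (l + 1)
      push_cast at this ⊢
      convert this using 2 <;> push_cast <;> ring
    have ee : ((j : ℤ) + 1) = ((j + 1 : ℕ) : ℤ) := by push_cast; ring
    rw [eb1, eb2, eb3, ee, zpow_natCast]
    have e1 : Fp t (j + 1 + l + 1) = Fp t (j + 1 + l) * (1 - t ^ (j + 1 + l + 1)) := Fp_succ t _
    have e2 : Fp t (j + 1) = Fp t j * (1 - t ^ (j + 1)) := Fp_succ t j
    have e3 : Fp t (l + 1) = Fp t l * (1 - t ^ (l + 1)) := Fp_succ t l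
    rw [e1, e2, e3]
    have h1 := Fp_ne_zero ht j
    have h2 := Fp_ne_zero ht l
    have h3 := Fp_ne_zero ht (j + 1 + l)
    have h4 := one_sub_ne ht j
    have h5 := one_sub_ne ht l
    field_simp
    ring
  · subst hm
    have e1 : ((n : ℤ) + 1) = ((n + 1 : ℕ) : ℤ) := by push_cast; ring
    rw [B_zero_of_gt t n (by omega), e1, B_right ht (n + 1)]
    have e3 : ((n + 1 : ℕ) : ℤ) - 1 = (n : ℤ) := by push_cast; ring
    rw [e3, B_right ht n]
    ring
  · rw [B_zero_of_gt t _ (by push_cast; omega), B_zero_of_gt t n (by omega),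
      B_zero_of_gt t n (by omega)]
    ring

lemma B_absorb (ht : ‖t‖ < 1) (n : ℕ) (m : ℤ) :
    (1 - t ^ m) * B t n m = (1 - t ^ ((n : ℤ) + 1 - m)) * B t n (m - 1) := by
  obtain hm | hm | ⟨hm1, hm2⟩ | hm | hm :
      m < 0 ∨ m = 0 ∨ (1 ≤ m ∧ m ≤ (n : ℤ)) ∨ m = (n : ℤ) + 1 ∨ (n : ℤ) + 1 < m := by omega
  · rw [B_zero_of_neg t _ hm, B_zero_of_neg t n (by omega)]; ring
  · subst hm
    have hz : B t n ((0:ℤ) - 1) = 0 := B_zero_of_neg t n (by omega)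
    rw [hz]
    simp
  · obtain ⟨j, rfl⟩ : ∃ j : ℕ, m = (j : ℤ) + 1 := ⟨(m - 1).toNat, by omega⟩
    obtain ⟨l, rfl⟩ : ∃ l : ℕ, n = j + 1 + l := ⟨n - (j + 1), by omega⟩
    have eb2 : B t (j + 1 + l) ((j : ℤ) + 1)
        = Fp t (j + 1 + l) * (Fp t (j + 1))⁻¹ * (Fp t l)⁻¹ := by
      have := B_eq t (j + 1) l
      push_cast at this ⊢
      convert this using 2 <;> push_cast <;> ring
    have eb3 : B t (j + 1 + l) ((j : ℤ) + 1 - 1)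
        = Fp t (j + 1 + l) * (Fp t j)⁻¹ * (Fp t (l + 1))⁻¹ := by
      have := B_eq t j (l + 1)
      push_cast at this ⊢
      convert this using 2 <;> push_cast <;> ring
    have ee : ((j : ℤ) + 1) = ((j + 1 : ℕ) : ℤ) := by push_cast; ring
    have ee2 : ((j + 1 + l : ℕ) : ℤ) + 1 - ((j : ℤ) + 1) = ((l + 1 : ℕ) : ℤ) := by
      push_cast; ring
    rw [eb2, eb3, ee2, ee, zpow_natCast, zpow_natCast]
    have e2 : Fp t (j + 1) = Fp t j * (1 - t ^ (j + 1)) := Fp_succ t j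
    have e3 : Fp t (l + 1) = Fp t l * (1 - t ^ (l + 1)) := Fp_succ t l
    rw [e2, e3]
    have h1 := Fp_ne_zero ht j
    have h2 := Fp_ne_zero ht l
    have h4 := one_sub_ne ht j
    have h5 := one_sub_ne ht l
    field_simp
  · subst hm
    have e2 : ((n : ℤ) + 1 - ((n : ℤ) + 1)) = 0 := by ring
    have e3 : ((n : ℤ) + 1) - 1 = (n : ℤ) := by ring
    rw [B_zero_of_gt t n (by omega), e2, e3]
    simp
  · rw [B_zero_of_gt t n (by omega), B_zero_of_gt t n (by omega)]; ring

lemma B_rec (ht : ‖t‖ < 1) (ht0 : t ≠ 0) (n : ℕ) (m : ℤ) :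
    B t (n + 2) m = t ^ m * B t n m + (1 + t ^ ((n : ℤ) + 1)) * B t n (m - 1)
      + t ^ ((n : ℤ) + 2 - m) * B t n (m - 2) := by
  have h1 := B_pascal1 ht (n + 1) m
  have h2 := B_pascal2 ht n m
  have h3 := B_pascal1 ht n (m - 1)
  have h4 := B_absorb ht n (m - 1)
  have ee1 : ((n + 1 : ℕ) : ℤ) + 1 - m = (n : ℤ) + 2 - m := by push_cast; ring
  have ee2 : ((n : ℤ) + 1 - (m - 1)) = (n : ℤ) + 2 - m := by ring
  have ee3 : (m - 1 - 1 : ℤ) = m - 2 := by ring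
  rw [ee1] at h1
  rw [ee2, ee3] at h3
  rw [ee2, ee3] at h4
  have e1 : t ^ ((n : ℤ) + 2 - m) * t ^ (m - 1) = t ^ ((n : ℤ) + 1) := by
    rw [← zpow_add₀ ht0]; congr 1; ring
  have e2 : t ^ ((n : ℤ) + 2 - m) * t ^ ((n : ℤ) + 2 - m) = t ^ (2 * ((n : ℤ) + 2 - m)) := by
    rw [← zpow_add₀ ht0]; congr 1; ring
  have hnn : n + 1 + 1 = n + 2 := by omega
  rw [hnn] at h1
  linear_combination h1 + h2 + t ^ ((n : ℤ) + 2 - m) * h3 + t ^ ((n : ℤ) + 2 - m) * h4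
    + B t n (m - 1) * e1
lemma spow2 (hs0 : s ≠ 0) (a : ℤ) : (s ^ 2 : ℂ) ^ a = s ^ (2 * a) := by
  rw [← zpow_natCast s 2, ← zpow_mul]
  norm_num

lemma jc_eq (hs : ‖s‖ < 1) (hs0 : s ≠ 0) (N : ℕ) (n : ℤ) :
    jc s N n = s ^ (n ^ 2) * B (s ^ 2) (2 * N) ((N : ℤ) + n) := by
  have ht : ‖s ^ 2‖ < 1 := by
    rw [norm_pow]
    exact pow_lt_one₀ (norm_nonneg s) hs two_ne_zero
  have ht0 : (s ^ 2 : ℂ) ≠ 0 := pow_ne_zero 2 hs0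
  induction N generalizing n with
  | zero =>
    show (if n = 0 then (1:ℂ) else 0) = _
    simp only [Nat.mul_zero, mul_zero, Nat.cast_zero, zero_add]
    rcases eq_or_ne n 0 with rfl | hn
    · simp [B, G, Fp]
    · rcases lt_or_gt_of_ne hn with h | h
      · rw [B_zero_of_neg _ _ h]
        simp [hn]
      · rw [B_zero_of_gt _ _ (by exact_mod_cast h : ((0 : ℕ) : ℤ) < n)]
        simp [hn]
  | succ N ih =>
    show jc s N n * (1 + s ^ (4 * N + 2)) +
      s ^ (2 * N + 1) * (jc s N (n - 1) + jc s N (n + 1)) = _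
    rw [ih n, ih (n - 1), ih (n + 1)]
    have h2n : 2 * (N + 1) = 2 * N + 2 := by ring
    rw [h2n]
    have hrec := B_rec ht ht0 (2 * N) ((N : ℤ) + 1 + n)
    have hm : ((N + 1 : ℕ) : ℤ) + n = (N : ℤ) + 1 + n := by push_cast; ring
    have hm1 : (N : ℤ) + 1 + n - 1 = (N : ℤ) + n := by ring
    have hm2 : (N : ℤ) + 1 + n - 2 = (N : ℤ) + (n - 1) := by ring
    have hm3 : ((2 * N : ℕ) : ℤ) + 2 - ((N : ℤ) + 1 + n) = (N : ℤ) + 1 - n := by push_cast; ring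
    rw [hm, hrec, hm1, hm2, hm3]
    have hm4 : (N : ℤ) + 1 + n = (N : ℤ) + (n + 1) := by ring
    rw [hm4]
    set X := B (s ^ 2) (2 * N) ((N : ℤ) + (n + 1))
    set Y := B (s ^ 2) (2 * N) ((N : ℤ) + n)
    set Z := B (s ^ 2) (2 * N) ((N : ℤ) + (n - 1))
    have p1 : (s : ℂ) ^ (4 * N + 2) = s ^ ((4 * N + 2 : ℕ) : ℤ) := (zpow_natCast s _).symm
    have p2 : (s : ℂ) ^ (2 * N + 1) = s ^ ((2 * N + 1 : ℕ) : ℤ) := (zpow_natCast s _).symm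
    rw [p1, p2]
    have i1 : s ^ (n ^ 2) * (s ^ 2 : ℂ) ^ ((N : ℤ) + (n + 1))
        = s ^ ((2 * N + 1 : ℕ) : ℤ) * s ^ ((n + 1) ^ 2) := by
      rw [spow2 hs0, ← zpow_add₀ hs0, ← zpow_add₀ hs0]
      congr 1
      push_cast
      ring
    have i2 : s ^ (n ^ 2) * (s ^ 2 : ℂ) ^ (((2 * N : ℕ) : ℤ) + 1)
        = s ^ (n ^ 2) * s ^ ((4 * N + 2 : ℕ) : ℤ) := by
      rw [spow2 hs0, ← zpow_add₀ hs0, ← zpow_add₀ hs0]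
      congr 1
      push_cast
      ring
    have i3 : s ^ (n ^ 2) * (s ^ 2 : ℂ) ^ ((N : ℤ) + 1 - n)
        = s ^ ((2 * N + 1 : ℕ) : ℤ) * s ^ ((n - 1) ^ 2) := by
      rw [spow2 hs0, ← zpow_add₀ hs0, ← zpow_add₀ hs0]
      congr 1
      push_cast
      ring
    linear_combination (-X) * i1 + (-Y) * i2 + (-Z) * i3

lemma jc_zero_of_abs (hs : ‖s‖ < 1) (hs0 : s ≠ 0) (N : ℕ) {n : ℤ}
    (hn : (N : ℤ) < |n|) : jc s N n = 0 := by
  rw [jc_eq hs hs0]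
  rcases abs_cases n with ⟨h, _⟩ | ⟨h, _⟩
  · rw [B_zero_of_gt _ _ (by push_cast; omega : ((2 * N : ℕ) : ℤ) < (N : ℤ) + n)]
    ring
  · rw [B_zero_of_neg _ _ (by omega : (N : ℤ) + n < 0)]
    ring
lemma exp_le_one_sub {x a : ℝ} (hx : 0 ≤ x) (hxa : x ≤ a) (ha : a < 1) :
    Real.exp (-(x * (1 - a)⁻¹)) ≤ 1 - x := by
  have h1a : 0 < 1 - a := by linarith
  set d : ℝ := x * (1 - a)⁻¹ with hd
  have hd0 : 0 ≤ d := mul_nonneg hx (by positivity)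
  have hdx : d * (1 - a) = x := by
    rw [hd, mul_assoc, inv_mul_cancel₀ h1a.ne', mul_one]
  have h2 : Real.exp (-d) ≤ (1 + d)⁻¹ := by
    rw [Real.exp_neg]
    apply inv_anti₀ (by linarith)
    linarith [Real.add_one_le_exp d]
  refine h2.trans ?_
  rw [inv_eq_one_div, div_le_iff₀ (by linarith)]
  nlinarith

lemma norm_one_add_ge (w : ℂ) : 1 - ‖w‖ ≤ ‖1 + w‖ := by
  have h : (1 : ℝ) ≤ ‖1 + w‖ + ‖w‖ := by
    have := norm_add_le (1 + w) (-w)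
    simpa using this
  linarith

variable {a : ℝ} {w : ℕ → ℂ}

lemma sum_pow_le (ha : 0 ≤ a) (ha1 : a < 1) (k : ℕ) :
    ∑ i ∈ Finset.range k, a ^ (i + 1) ≤ a * (1 - a)⁻¹ := by
  have hsummable : Summable (fun i : ℕ => a ^ (i + 1)) := by
    simpa [pow_succ'] using (summable_geometric_of_lt_one ha ha1).mul_left a
  have h1 := Summable.sum_le_tsum (Finset.range k) (fun i _ => by positivity) hsummable
  refine h1.trans ?_
  have : ∑' i : ℕ, a ^ (i + 1) = a * (1 - a)⁻¹ := by
    simp only [pow_succ']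
    rw [tsum_mul_left, tsum_geometric_of_lt_one ha ha1]
  rw [this]

lemma prod_norm_le (ha : 0 ≤ a) (ha1 : a < 1) (hw : ∀ i, ‖w i‖ ≤ a ^ (i + 1)) (k : ℕ) :
    ‖∏ i ∈ Finset.range k, (1 + w i)‖ ≤ Real.exp (a * (1 - a)⁻¹) := by
  rw [norm_prod]
  calc ∏ i ∈ Finset.range k, ‖1 + w i‖
      ≤ ∏ i ∈ Finset.range k, Real.exp (a ^ (i + 1)) := by
        apply Finset.prod_le_prod (fun i _ => norm_nonneg _)
        intro i _
        calc ‖1 + w i‖ ≤ ‖(1 : ℂ)‖ + ‖w i‖ := norm_add_le _ _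
          _ ≤ 1 + a ^ (i + 1) := by
              simp only [norm_one]
              linarith [hw i]
          _ ≤ Real.exp (a ^ (i + 1)) := by
              linarith [Real.add_one_le_exp (a ^ (i + 1))]
    _ = Real.exp (∑ i ∈ Finset.range k, a ^ (i + 1)) := by rw [Real.exp_sum]
    _ ≤ Real.exp (a * (1 - a)⁻¹) := Real.exp_le_exp.2 (sum_pow_le ha ha1 k)

lemma prod_norm_ge (ha : 0 ≤ a) (ha1 : a < 1) (hw : ∀ i, ‖w i‖ ≤ a ^ (i + 1)) (k : ℕ) :
    Real.exp (-(a * (1 - a)⁻¹ * (1 - a)⁻¹)) ≤ ‖∏ i ∈ Finset.range k, (1 + w i)‖ := by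
  rw [norm_prod]
  have key : ∀ i, Real.exp (-(a ^ (i + 1) * (1 - a)⁻¹)) ≤ ‖1 + w i‖ := by
    intro i
    have hpa : a ^ (i + 1) ≤ a := by
      calc a ^ (i + 1) ≤ a ^ 1 := pow_le_pow_of_le_one ha ha1.le (by omega)
        _ = a := pow_one a
    calc Real.exp (-(a ^ (i + 1) * (1 - a)⁻¹)) ≤ 1 - a ^ (i + 1) :=
          exp_le_one_sub (by positivity) hpa ha1
      _ ≤ 1 - ‖w i‖ := by linarith [hw i]
      _ ≤ ‖1 + w i‖ := norm_one_add_ge _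
  calc Real.exp (-(a * (1 - a)⁻¹ * (1 - a)⁻¹))
      ≤ Real.exp (∑ i ∈ Finset.range k, -(a ^ (i + 1) * (1 - a)⁻¹)) := by
        apply Real.exp_le_exp.2
        rw [Finset.sum_neg_distrib, neg_le_neg_iff, ← Finset.sum_mul]
        have := sum_pow_le ha ha1 k
        have hinv : (0:ℝ) ≤ (1 - a)⁻¹ := by
          have : (0:ℝ) < 1 - a := by linarith
          positivity
        nlinarith
    _ = ∏ i ∈ Finset.range k, Real.exp (-(a ^ (i + 1) * (1 - a)⁻¹)) := by rw [Real.exp_sum]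
    _ ≤ ∏ i ∈ Finset.range k, ‖1 + w i‖ :=
        Finset.prod_le_prod (fun i _ => (Real.exp_pos _).le) (fun i _ => key i)


lemma summable_norm_w (ha : 0 ≤ a) (ha1 : a < 1) (hw : ∀ i, ‖w i‖ ≤ a ^ (i + 1)) :
    Summable fun i => ‖w i‖ := by
  apply Summable.of_nonneg_of_le (fun i => norm_nonneg _) hw
  simpa [pow_succ'] using (summable_geometric_of_lt_one ha ha1).mul_left a

lemma mult_one_add' (hsum : Summable fun i => ‖w i‖)
    (hne : ∀ i, (1 : ℂ) + w i ≠ 0) : Multipliable fun i => 1 + w i := by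
  have hlog : Summable fun i => Complex.log (1 + w i) := by
    apply Summable.of_norm_bounded_eventually (g := fun i => 3 / 2 * ‖w i‖) (hsum.mul_left _)
    rw [Nat.cofinite_eq_atTop]
    have h0 : Tendsto (fun i => ‖w i‖) atTop (nhds 0) := hsum.tendsto_atTop_zero
    filter_upwards [h0.eventually_le_const (by norm_num : (0:ℝ) < 1/2)] with i hi
    exact Complex.norm_log_one_add_half_le_self hi
  exact Complex.multipliable_of_summable_log hlog

lemma tendsto_prod' (hsum : Summable fun i => ‖w i‖)
    (hne : ∀ i, (1 : ℂ) + w i ≠ 0) :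
    Tendsto (fun k => ∏ i ∈ Finset.range k, (1 + w i)) atTop (nhds (∏' i, (1 + w i))) :=
  (mult_one_add' hsum hne).hasProd.tendsto_prod_nat

lemma mult_one_add (ha : 0 ≤ a) (ha1 : a < 1) (hw : ∀ i, ‖w i‖ ≤ a ^ (i + 1))
    (hne : ∀ i, (1 : ℂ) + w i ≠ 0) : Multipliable fun i => 1 + w i :=
  mult_one_add' (summable_norm_w ha ha1 hw) hne

lemma tendsto_prod (ha : 0 ≤ a) (ha1 : a < 1) (hw : ∀ i, ‖w i‖ ≤ a ^ (i + 1))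
    (hne : ∀ i, (1 : ℂ) + w i ≠ 0) :
    Tendsto (fun k => ∏ i ∈ Finset.range k, (1 + w i)) atTop (nhds (∏' i, (1 + w i))) :=
  tendsto_prod' (summable_norm_w ha ha1 hw) hne

lemma tprod_norm_ge (ha : 0 ≤ a) (ha1 : a < 1) (hw : ∀ i, ‖w i‖ ≤ a ^ (i + 1))
    (hne : ∀ i, (1 : ℂ) + w i ≠ 0) :
    Real.exp (-(a * (1 - a)⁻¹ * (1 - a)⁻¹)) ≤ ‖∏' i, (1 + w i)‖ :=
  ge_of_tendsto (tendsto_prod ha ha1 hw hne).norm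
    (Eventually.of_forall (prod_norm_ge ha ha1 hw))

lemma tprod_one_add_ne_zero (ha : 0 ≤ a) (ha1 : a < 1) (hw : ∀ i, ‖w i‖ ≤ a ^ (i + 1))
    (hne : ∀ i, (1 : ℂ) + w i ≠ 0) : (∏' i, (1 + w i)) ≠ 0 := by
  intro h
  have := tprod_norm_ge ha ha1 hw hne
  rw [h] at this
  simp at this
  exact absurd this (not_le.2 (Real.exp_pos _))

lemma sub_one_add (t : ℂ) (i : ℕ) : (1 : ℂ) - t ^ (i + 1) = 1 + -(t ^ (i + 1)) := by ring

lemma wt_bound (t : ℂ) (i : ℕ) : ‖-(t ^ (i + 1))‖ ≤ ‖t‖ ^ (i + 1) := by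
  rw [norm_neg, norm_pow]

lemma wt_ne (ht : ‖t‖ < 1) (i : ℕ) : (1 : ℂ) + -(t ^ (i + 1)) ≠ 0 := by
  rw [← sub_one_add]; exact one_sub_ne ht i

lemma Fp_eq_w (t : ℂ) (k : ℕ) : Fp t k = ∏ i ∈ Finset.range k, (1 + -(t ^ (i + 1))) :=
  Finset.prod_congr rfl fun i _ => sub_one_add t i

lemma Fpinf_eq_w (t : ℂ) : Fpinf t = ∏' i : ℕ, (1 + -(t ^ (i + 1))) :=
  tprod_congr fun i => sub_one_add t i

lemma Fp_mult (ht : ‖t‖ < 1) : Multipliable (fun i : ℕ => 1 - t ^ (i + 1)) := by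
  have := mult_one_add (norm_nonneg t) ht (wt_bound t) (wt_ne ht)
  exact this.congr fun i => (sub_one_add t i).symm

lemma Fp_tendsto (ht : ‖t‖ < 1) : Tendsto (Fp t) atTop (nhds (Fpinf t)) := by
  rw [Fpinf_eq_w]
  have := tendsto_prod (norm_nonneg t) ht (wt_bound t) (wt_ne ht)
  exact this.congr fun k => (Fp_eq_w t k).symm

lemma Fp_norm_le (ht : ‖t‖ < 1) (k : ℕ) : ‖Fp t k‖ ≤ Ct ‖t‖ := by
  rw [Fp_eq_w]; exact prod_norm_le (norm_nonneg t) ht (wt_bound t) k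

lemma Fp_norm_ge (ht : ‖t‖ < 1) (k : ℕ) : Dt ‖t‖ ≤ ‖Fp t k‖ := by
  rw [Fp_eq_w]; exact prod_norm_ge (norm_nonneg t) ht (wt_bound t) k

lemma Fpinf_ne_zero (ht : ‖t‖ < 1) : Fpinf t ≠ 0 := by
  rw [Fpinf_eq_w]
  exact tprod_one_add_ne_zero (norm_nonneg t) ht (wt_bound t) (wt_ne ht)

lemma G_norm_le (ht : ‖t‖ < 1) (m : ℤ) : ‖G t m‖ ≤ (Dt ‖t‖)⁻¹ := by
  unfold G
  split
  · rw [norm_inv]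
    exact inv_anti₀ (Dt_pos _) (Fp_norm_ge ht _)
  · simp only [norm_zero]
    exact inv_nonneg.2 (Dt_pos _).le

lemma B_norm_le (ht : ‖t‖ < 1) (n : ℕ) (m : ℤ) :
    ‖B t n m‖ ≤ Ct ‖t‖ * (Dt ‖t‖)⁻¹ * (Dt ‖t‖)⁻¹ := by
  unfold B
  rw [norm_mul, norm_mul]
  have h1 : (0:ℝ) ≤ (Dt ‖t‖)⁻¹ := inv_nonneg.2 (Dt_pos _).le
  have h2 : (0:ℝ) ≤ Ct ‖t‖ := (Real.exp_pos _).le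
  apply mul_le_mul
  apply mul_le_mul (Fp_norm_le ht n) (G_norm_le ht m) (norm_nonneg _) h2
  · exact G_norm_le ht _
  · exact norm_nonneg _
  · exact mul_nonneg h2 h1

lemma B_tendsto (ht : ‖t‖ < 1) (n : ℤ) :
    Tendsto (fun N : ℕ => B t (2 * N) ((N : ℤ) + n)) atTop
      (nhds (Fpinf t * (Fpinf t)⁻¹ * (Fpinf t)⁻¹)) := by
  have hFne := Fpinf_ne_zero ht
  have t1 : Tendsto (fun N : ℕ => Fp t (2 * N)) atTop (nhds (Fpinf t)) :=
    (Fp_tendsto ht).comp (tendsto_atTop_mono (fun N => by simp only [id_eq]; omega) tendsto_id)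
  have key : ∀ c : ℤ, Tendsto (fun N : ℕ => G t ((N : ℤ) + c)) atTop (nhds (Fpinf t)⁻¹) := by
    intro c
    have hcomp : Tendsto (fun N : ℕ => ((N : ℤ) + c).toNat) atTop atTop := by
      apply tendsto_atTop_atTop.2
      intro b
      exact ⟨b + c.natAbs, fun N hN => by omega⟩
    have t2 : Tendsto (fun N : ℕ => (Fp t (((N : ℤ) + c).toNat))⁻¹) atTop
        (nhds (Fpinf t)⁻¹) := (((Fp_tendsto ht).comp hcomp).inv₀ hFne)
    apply t2.congr'
    filter_upwards [eventually_ge_atTop c.natAbs] with N hN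
    rw [G, if_pos (by omega)]
  have t3 : Tendsto (fun N : ℕ => G t (((2 * N : ℕ) : ℤ) - ((N : ℤ) + n))) atTop
      (nhds (Fpinf t)⁻¹) := by
    have := key (-n)
    apply this.congr
    intro N
    congr 1
    push_cast
    ring
  exact (t1.mul (key n)).mul t3
lemma summable_gauss {a c : ℝ} (ha : 0 < a) (ha1 : a < 1) (hc : 0 < c) :
    Summable (fun n : ℕ => a ^ (n ^ 2) * c ^ n) := by
  apply summable_of_ratio_norm_eventually_le (r := 1 / 2) (by norm_num)
  have htend : Tendsto (fun n : ℕ => a ^ (2 * n + 1) * c) atTop (nhds 0) := by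
    have h1 : Tendsto (fun n : ℕ => (a ^ 2) ^ n) atTop (nhds 0) :=
      tendsto_pow_atTop_nhds_zero_of_lt_one (by positivity)
        (by nlinarith)
    have h2 : (fun n : ℕ => a ^ (2 * n + 1) * c) = fun n => ((a ^ 2) ^ n) * (a * c) := by
      funext n
      rw [← pow_mul]
      ring
    rw [h2]
    simpa using h1.mul_const (a * c)
  filter_upwards [htend.eventually_le_const (by norm_num : (0:ℝ) < 1/2)] with n hn
  have he : a ^ ((n + 1) ^ 2) * c ^ (n + 1) = (a ^ (n ^ 2) * c ^ n) * (a ^ (2 * n + 1) * c) := by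
    rw [show (n + 1) ^ 2 = n ^ 2 + (2 * n + 1) by ring, pow_add, pow_succ]
    ring
  rw [Real.norm_of_nonneg (by positivity), Real.norm_of_nonneg (by positivity), he]
  have hb : (0:ℝ) ≤ a ^ (n ^ 2) * c ^ n := by positivity
  nlinarith [mul_le_mul_of_nonneg_left hn hb]

lemma summable_gauss_int {a c : ℝ} (ha : 0 < a) (ha1 : a < 1) (hc : 0 < c) :
    Summable (fun k : ℤ => a ^ (k ^ 2) * c ^ k) := by
  apply Summable.of_nat_of_neg_add_one
  · apply (summable_gauss ha ha1 hc).congr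
    intro n
    rw [show ((n : ℤ) ^ 2) = ((n ^ 2 : ℕ) : ℤ) by push_cast; ring, zpow_natCast, zpow_natCast]
  · have base := summable_gauss ha (c := c⁻¹) ha1 (by positivity)
    have : Summable fun n : ℕ => a ^ ((n + 1) ^ 2) * c⁻¹ ^ (n + 1) :=
      (summable_nat_add_iff 1).2 base
    apply this.congr
    intro n
    rw [show ((-((n : ℤ) + 1)) ^ 2) = (((n + 1) ^ 2 : ℕ) : ℤ) by push_cast; ring,
      zpow_natCast]
    congr 1
    rw [← zpow_natCast c⁻¹ (n + 1), inv_zpow, ← zpow_neg]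
    norm_num

lemma jc_summable (hs : ‖s‖ < 1) (hs0 : s ≠ 0) (hz0 : z ≠ 0) (N : ℕ) :
    Summable fun n : ℤ => jc s N n * z ^ n := by
  apply summable_of_ne_finset_zero (s := Finset.Icc (-(N : ℤ)) N)
  intro b hb
  rw [Finset.mem_Icc] at hb
  rw [jc_zero_of_abs hs hs0 N (lt_abs.mpr (by omega)), zero_mul]

lemma prod_eq_jsum (hs : ‖s‖ < 1) (hs0 : s ≠ 0) (hz0 : z ≠ 0) (N : ℕ) :
    ∏ j ∈ Finset.range N, ((1 + z * s ^ (2 * j + 1)) * (1 + z⁻¹ * s ^ (2 * j + 1)))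
      = ∑' n : ℤ, jc s N n * z ^ n := by
  induction N with
  | zero =>
    rw [Finset.prod_range_zero]
    rw [tsum_eq_single 0 (fun b hb => by
      show (if b = 0 then (1:ℂ) else 0) * z ^ b = 0
      simp [hb])]
    show (1:ℂ) = (if (0:ℤ) = 0 then (1:ℂ) else 0) * z ^ (0:ℤ)
    simp
  | succ N ih =>
    rw [Finset.prod_range_succ, ih]
    have hsm := jc_summable hs hs0 hz0 (N := N)
    have hsm1 : Summable fun n : ℤ => jc s N (n - 1) * z ^ (n - 1) := by
      have := (Equiv.subRight (1 : ℤ)).summable_iff.2 hsm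
      exact this.congr fun n => rfl
    have hsm2 : Summable fun n : ℤ => jc s N (n + 1) * z ^ (n + 1) := by
      have := (Equiv.addRight (1 : ℤ)).summable_iff.2 hsm
      exact this.congr fun n => rfl
    have expand : (fun n : ℤ => jc s (N + 1) n * z ^ n)
        = fun n : ℤ => (1 + s ^ (4 * N + 2)) * (jc s N n * z ^ n)
          + (s ^ (2 * N + 1) * z) * (jc s N (n - 1) * z ^ (n - 1))
          + (s ^ (2 * N + 1) * z⁻¹) * (jc s N (n + 1) * z ^ (n + 1)) := by
      funext n
      show (jc s N n * (1 + s ^ (4 * N + 2)) +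
        s ^ (2 * N + 1) * (jc s N (n - 1) + jc s N (n + 1))) * z ^ n = _
      have e1 : z * z ^ (n - 1) = z ^ n := by
        rw [zpow_sub_one₀ hz0]
        field_simp
      have e2 : z⁻¹ * z ^ (n + 1) = z ^ n := by
        rw [zpow_add_one₀ hz0]
        field_simp
      linear_combination (s ^ (2 * N + 1) * jc s N (n - 1)) * e1.symm
        + (s ^ (2 * N + 1) * jc s N (n + 1)) * e2.symm
    rw [expand]
    rw [Summable.tsum_add (((hsm.mul_left _).add (hsm1.mul_left _))) (hsm2.mul_left _),
      Summable.tsum_add (hsm.mul_left _) (hsm1.mul_left _), tsum_mul_left, tsum_mul_left,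
      tsum_mul_left]
    have sh1 : ∑' n : ℤ, jc s N (n - 1) * z ^ (n - 1) = ∑' n : ℤ, jc s N n * z ^ n := by
      exact (Equiv.subRight (1 : ℤ)).tsum_eq (fun n => jc s N n * z ^ n)
    have sh2 : ∑' n : ℤ, jc s N (n + 1) * z ^ (n + 1) = ∑' n : ℤ, jc s N n * z ^ n := by
      exact (Equiv.addRight (1 : ℤ)).tsum_eq (fun n => jc s N n * z ^ n)
    rw [sh1, sh2]
    set T := ∑' n : ℤ, jc s N n * z ^ n
    have hzz : z * z⁻¹ = 1 := mul_inv_cancel₀ hz0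
    have hpp : (s : ℂ) ^ (2 * N + 1) * s ^ (2 * N + 1) = s ^ (4 * N + 2) := by
      rw [← pow_add]
      congr 1
      ring
    linear_combination (T * s ^ (2 * N + 1) * s ^ (2 * N + 1)) * hzz + T * hpp
lemma summable_norm_zs (hs : ‖s‖ < 1) (u : ℂ) :
    Summable fun j : ℕ => ‖u * s ^ (2 * j + 1)‖ := by
  have : (fun j : ℕ => ‖u * s ^ (2 * j + 1)‖) = fun j => (‖u‖ * ‖s‖) * (‖s‖ ^ 2) ^ j := by
    funext j
    rw [norm_mul, norm_pow, ← pow_mul]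
    ring
  rw [this]
  apply Summable.mul_left
  exact summable_geometric_of_lt_one (by positivity) (by nlinarith [norm_nonneg s])

theorem jtp (hs : ‖s‖ < 1) (hs0 : s ≠ 0) (hz0 : z ≠ 0)
    (h1 : ∀ j : ℕ, (1 : ℂ) + z * s ^ (2 * j + 1) ≠ 0)
    (h2 : ∀ j : ℕ, (1 : ℂ) + z⁻¹ * s ^ (2 * j + 1) ≠ 0) :
    ∑' n : ℤ, s ^ (n ^ 2) * z ^ n =
      Fpinf (s ^ 2) * ((∏' j : ℕ, (1 + z * s ^ (2 * j + 1)))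
        * (∏' j : ℕ, (1 + z⁻¹ * s ^ (2 * j + 1)))) := by
  have ht : ‖s ^ 2‖ < 1 := by
    rw [norm_pow]
    nlinarith [norm_nonneg s]
  have hs_pos : 0 < ‖s‖ := norm_pos_iff.2 hs0
  have hz_pos : 0 < ‖z‖ := norm_pos_iff.2 hz0
  have hFne := Fpinf_ne_zero ht
  set F := Fpinf (s ^ 2) with hF
  set CB : ℝ := Ct ‖(s:ℂ) ^ 2‖ * (Dt ‖(s:ℂ) ^ 2‖)⁻¹ * (Dt ‖(s:ℂ) ^ 2‖)⁻¹ with hCB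
  -- Tannery
  have h_sum : Summable (fun k : ℤ => CB * (‖s‖ ^ (k ^ 2) * ‖z‖ ^ k)) :=
    (summable_gauss_int hs_pos hs hz_pos).mul_left CB
  have hab : ∀ k : ℤ, Tendsto (fun N : ℕ => jc s N k * z ^ k) atTop
      (nhds (s ^ (k ^ 2) * (F * F⁻¹ * F⁻¹) * z ^ k)) := by
    intro k
    have := ((B_tendsto ht k).const_mul (s ^ (k ^ 2))).mul_const (z ^ k)
    apply this.congr
    intro N
    rw [jc_eq hs hs0]
  have h_bound : ∀ᶠ N : ℕ in atTop, ∀ k : ℤ,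
      ‖jc s N k * z ^ k‖ ≤ CB * (‖s‖ ^ (k ^ 2) * ‖z‖ ^ k) := by
    apply Eventually.of_forall
    intro N k
    rw [jc_eq hs hs0, norm_mul, norm_mul, norm_zpow, norm_zpow]
    have hBn := B_norm_le ht (2 * N) ((N : ℤ) + k)
    have hs2 : (0:ℝ) ≤ ‖s‖ ^ (k ^ 2) := by positivity
    have hz2 : (0:ℝ) ≤ ‖z‖ ^ k := by positivity
    calc ‖s‖ ^ (k ^ 2) * ‖B (s ^ 2) (2 * N) ((N : ℤ) + k)‖ * ‖z‖ ^ k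
        ≤ ‖s‖ ^ (k ^ 2) * CB * ‖z‖ ^ k := by
          apply mul_le_mul_of_nonneg_right _ hz2
          exact mul_le_mul_of_nonneg_left hBn hs2
      _ = CB * (‖s‖ ^ (k ^ 2) * ‖z‖ ^ k) := by ring
  have tan := tendsto_tsum_of_dominated_convergence h_sum hab h_bound
  -- product side
  have m1 : Summable fun j : ℕ => ‖z * s ^ (2 * j + 1)‖ := summable_norm_zs hs z
  have m2 : Summable fun j : ℕ => ‖z⁻¹ * s ^ (2 * j + 1)‖ := summable_norm_zs hs z⁻¹
  have tp : Tendsto (fun N : ℕ => ∏ j ∈ Finset.range N,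
      ((1 + z * s ^ (2 * j + 1)) * (1 + z⁻¹ * s ^ (2 * j + 1)))) atTop
      (nhds ((∏' j : ℕ, (1 + z * s ^ (2 * j + 1)))
        * (∏' j : ℕ, (1 + z⁻¹ * s ^ (2 * j + 1))))) := by
    have := (tendsto_prod' m1 h1).mul (tendsto_prod' m2 h2)
    apply this.congr
    intro N
    rw [← Finset.prod_mul_distrib]
  have tp2 : Tendsto (fun N : ℕ => ∑' k : ℤ, jc s N k * z ^ k) atTop
      (nhds ((∏' j : ℕ, (1 + z * s ^ (2 * j + 1)))
        * (∏' j : ℕ, (1 + z⁻¹ * s ^ (2 * j + 1))))) := by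
    apply tp.congr
    intro N
    exact prod_eq_jsum hs hs0 hz0 N
  have huniq := tendsto_nhds_unique tp2 tan
  have hsum_eq : ∑' k : ℤ, s ^ (k ^ 2) * (F * F⁻¹ * F⁻¹) * z ^ k
      = F⁻¹ * ∑' k : ℤ, s ^ (k ^ 2) * z ^ k := by
    calc ∑' k : ℤ, s ^ (k ^ 2) * (F * F⁻¹ * F⁻¹) * z ^ k
        = ∑' k : ℤ, F⁻¹ * (s ^ (k ^ 2) * z ^ k) := by
          apply tsum_congr
          intro k
          have hFF : F * F⁻¹ * F⁻¹ = F⁻¹ := by field_simp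
          rw [hFF]
          ring
      _ = F⁻¹ * ∑' k : ℤ, s ^ (k ^ 2) * z ^ k := tsum_mul_left
  rw [hsum_eq] at huniq
  rw [huniq]
  field_simp
lemma mult_shape (hq : ‖q‖ < 1) (b c : ℕ) (hb : 0 < b) :
    Multipliable fun k : ℕ => (1 : ℂ) - q ^ (b * k + (c + 1)) := by
  have hsum : Summable fun k : ℕ => ‖-(q ^ (b * k + (c + 1)))‖ := by
    have hgeo : Summable fun k : ℕ => ‖q‖ ^ (c + 1) * (‖q‖ ^ b) ^ k := by
      apply Summable.mul_left
      apply summable_geometric_of_lt_one (by positivity)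
      calc ‖q‖ ^ b ≤ ‖q‖ ^ 1 := by
            apply pow_le_pow_of_le_one (norm_nonneg q) hq.le
            omega
        _ = ‖q‖ := pow_one _
        _ < 1 := hq
    apply hgeo.congr
    intro k
    rw [norm_neg, norm_pow, ← pow_mul, ← pow_add]
    congr 1
    ring
  have hne : ∀ k, (1 : ℂ) + -(q ^ (b * k + (c + 1))) ≠ 0 := by
    intro k
    have := one_sub_ne hq (b * k + c)
    rw [sub_eq_add_neg] at this
    have h2 : b * k + (c + 1) = b * k + c + 1 := by omega
    rw [h2]
    exact this
  have := mult_one_add' hsum hne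
  apply this.congr
  intro k
  rw [← sub_eq_add_neg]

lemma E_eq_Fpinf (q : ℂ) : E q = Fpinf q := rfl

lemma E_split (hq : ‖q‖ < 1) :
    E q = (∏' k : ℕ, (1 - q ^ (2 * k + 1))) * E (q ^ 2) := by
  have he : Multipliable fun k : ℕ => (1 : ℂ) - q ^ (2 * k + 1) := by
    have := mult_shape hq 2 0 (by omega)
    exact this.congr fun k => rfl
  have ho : Multipliable fun k : ℕ => (1 : ℂ) - q ^ (2 * k + 1 + 1) := by
    have := mult_shape hq 2 1 (by omega)
    apply this.congr
    intro k
    norm_num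
  rw [E, ← tprod_even_mul_odd (f := fun n => (1 : ℂ) - q ^ (n + 1)) he ho]
  congr 1
  rw [E]
  apply tprod_congr
  intro k
  have h : (q ^ 2) ^ (k + 1) = q ^ (2 * k + 1 + 1) := by ring
  rw [h]

lemma O_split (hq : ‖q‖ < 1) :
    (∏' k : ℕ, (1 - q ^ (2 * k + 1)))
      = (∏' k : ℕ, (1 - q ^ (4 * k + 1))) * (∏' k : ℕ, (1 - q ^ (4 * k + 3))) := by
  have he : Multipliable fun k : ℕ => (1 : ℂ) - q ^ (2 * (2 * k) + 1) := by
    have := mult_shape hq 4 0 (by omega)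
    apply this.congr
    intro k
    have h : (q : ℂ) ^ (4 * k + (0 + 1)) = q ^ (2 * (2 * k) + 1) := by ring
    rw [h]
  have ho : Multipliable fun k : ℕ => (1 : ℂ) - q ^ (2 * (2 * k + 1) + 1) := by
    have := mult_shape hq 4 2 (by omega)
    apply this.congr
    intro k
    have h : (q : ℂ) ^ (4 * k + (2 + 1)) = q ^ (2 * (2 * k + 1) + 1) := by ring
    rw [h]
  rw [← tprod_even_mul_odd (f := fun k => (1 : ℂ) - q ^ (2 * k + 1)) he ho]
  congr 1
  · apply tprod_congr
    intro k
    have h : (q : ℂ) ^ (2 * (2 * k) + 1) = q ^ (4 * k + 1) := by ring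
    rw [h]
  · apply tprod_congr
    intro k
    have h : (q : ℂ) ^ (2 * (2 * k + 1) + 1) = q ^ (4 * k + 3) := by ring
    rw [h]
lemma term_eq (hq0 : q ≠ 0) (n : ℤ) :
    (-q) ^ (2 * n ^ 2 - n) = (q ^ 2) ^ (n ^ 2) * (-q⁻¹) ^ n := by
  have hm1 : (-1 : ℂ) ≠ 0 := by norm_num
  have h1 : (-q) ^ (2 * n ^ 2 - n) = (-1 : ℂ) ^ (2 * n ^ 2 - n) * q ^ (2 * n ^ 2 - n) := by
    rw [show -q = (-1 : ℂ) * q by ring, mul_zpow]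
  have h2 : (-q⁻¹) ^ n = (-1 : ℂ) ^ n * q ^ (-n) := by
    rw [show -q⁻¹ = (-1 : ℂ) * q⁻¹ by ring, mul_zpow, inv_zpow, zpow_neg]
  have h3 : ((-1 : ℂ)) ^ (2 * n ^ 2 - n) = (-1 : ℂ) ^ n := by
    have e : (2 * n ^ 2 - n : ℤ) = 2 * n ^ 2 + -n := by ring
    rw [e, zpow_add₀ hm1, zpow_mul]
    norm_num
    rw [← inv_zpow, inv_neg, inv_one]
  have h4 : (q ^ 2 : ℂ) ^ (n ^ 2) = q ^ (2 * n ^ 2) := spow2 hq0 (n ^ 2)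
  have h5 : q ^ (2 * n ^ 2) * q ^ (-n) = q ^ (2 * n ^ 2 - n) := by
    rw [← zpow_add₀ hq0, sub_eq_add_neg]
  rw [h1, h3, h2, h4]
  linear_combination ((-1 : ℂ) ^ n) * h5.symm

lemma keyA (hq0 : q ≠ 0) (j : ℕ) :
    (1 : ℂ) + (-q⁻¹) * (q ^ 2) ^ (2 * j + 1) = 1 - q ^ (4 * j + 1) := by
  have h1 : ((q : ℂ) ^ 2) ^ (2 * j + 1) = q * q ^ (4 * j + 1) := by ring
  rw [h1]
  have h2 : (-q⁻¹) * (q * q ^ (4 * j + 1)) = -(q ^ (4 * j + 1)) := by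
    field_simp
  rw [h2]
  ring

lemma keyB (hq0 : q ≠ 0) (j : ℕ) :
    (1 : ℂ) + (-q⁻¹)⁻¹ * (q ^ 2) ^ (2 * j + 1) = 1 - q ^ (4 * j + 3) := by
  have h0 : (-q⁻¹ : ℂ)⁻¹ = -q := by
    rw [inv_neg, inv_inv]
  rw [h0]
  have h1 : ((q : ℂ) ^ 2) ^ (2 * j + 1) = q ^ (4 * j + 2) := by ring
  rw [h1]
  have h2 : (-q) * q ^ (4 * j + 2) = -(q ^ (4 * j + 3)) := by ring
  rw [h2]
  ring


end JTPaux

open JTPaux in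
theorem psi_neg_eta_quotient (q : ℂ) (hq : ‖q‖ < 1) :
    psi (-q) = E q * E (q ^ 4) / E (q ^ 2) := by
  rcases eq_or_ne q 0 with rfl | hq0
  · have hpsi : psi (-(0 : ℂ)) = 1 := by
      rw [neg_zero, psi]
      rw [tsum_eq_single 0 (fun b hb => by
        have hbne : 2 * b ^ 2 - b ≠ 0 := by
          rcases lt_or_gt_of_ne hb with h | h <;> nlinarith
        exact zero_zpow _ hbne)]
      simp
    have hE : E (0 : ℂ) = 1 := by
      rw [E]
      have : ∀ n : ℕ, (1 : ℂ) - (0 : ℂ) ^ (n + 1) = 1 := by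
        intro n
        rw [zero_pow (Nat.succ_ne_zero n)]
        ring
      rw [tprod_congr this, tprod_one]
    rw [hpsi, show ((0 : ℂ) ^ 4) = 0 by norm_num, show ((0 : ℂ) ^ 2) = 0 by norm_num, hE]
    norm_num
  · have hq2 : ‖(q : ℂ) ^ 2‖ < 1 := by
      rw [norm_pow]
      exact pow_lt_one₀ (norm_nonneg q) hq two_ne_zero
    have hq4 : ‖(q : ℂ) ^ 4‖ < 1 := by
      rw [norm_pow]
      exact pow_lt_one₀ (norm_nonneg q) hq (by norm_num)
    have hs0 : (q : ℂ) ^ 2 ≠ 0 := pow_ne_zero 2 hq0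
    have hz0 : (-q⁻¹ : ℂ) ≠ 0 := neg_ne_zero.2 (inv_ne_zero hq0)
    have h1 : ∀ j : ℕ, (1 : ℂ) + (-q⁻¹) * (q ^ 2) ^ (2 * j + 1) ≠ 0 := by
      intro j
      rw [keyA hq0 j]
      exact one_sub_ne hq (4 * j)
    have h2 : ∀ j : ℕ, (1 : ℂ) + (-q⁻¹)⁻¹ * (q ^ 2) ^ (2 * j + 1) ≠ 0 := by
      intro j
      rw [keyB hq0 j]
      exact one_sub_ne hq (4 * j + 2)
    have main := jtp hq2 hs0 hz0 h1 h2
    have hL : psi (-q) = ∑' n : ℤ, ((q : ℂ) ^ 2) ^ (n ^ 2) * (-q⁻¹) ^ n := by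
      rw [psi]
      exact tsum_congr fun n => term_eq hq0 n
    have hR1 : Fpinf (((q : ℂ) ^ 2) ^ 2) = E (q ^ 4) := by
      rw [show (((q : ℂ) ^ 2) ^ 2) = q ^ 4 by ring]
      rfl
    have hR2 : (∏' j : ℕ, ((1 : ℂ) + (-q⁻¹) * (q ^ 2) ^ (2 * j + 1)))
        = ∏' k : ℕ, (1 - q ^ (4 * k + 1)) := tprod_congr fun j => keyA hq0 j
    have hR3 : (∏' j : ℕ, ((1 : ℂ) + (-q⁻¹)⁻¹ * (q ^ 2) ^ (2 * j + 1)))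
        = ∏' k : ℕ, (1 - q ^ (4 * k + 3)) := tprod_congr fun j => keyB hq0 j
    rw [hL, main, hR1, hR2, hR3]
    have hEq : E q = ((∏' k : ℕ, ((1 : ℂ) - q ^ (4 * k + 1)))
        * (∏' k : ℕ, (1 - q ^ (4 * k + 3)))) * E (q ^ 2) := by
      rw [E_split hq, O_split hq]
    rw [hEq]
    have hE2 : E ((q : ℂ) ^ 2) ≠ 0 := Fpinf_ne_zero hq2
    field_simp
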